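/- If X is a cut-point space, then for every x ∈ X and every connected component C of X \ {x}, the set C ∪ {x} is not compact. -/
import Mathlib

open Set

/-- A preconnected set cannot be split into two nonempty separated pieces. -/
lemma aux_sep {X : Type*} [TopologicalSpace X] {s s1 s2 : Set X} (hs : IsPreconnected s)
    (hu : s = s1 ∪ s2) (h1 : closure s1 ∩ s2 = ∅) (h2 : s1 ∩ closure s2 = ∅) :
    s1 = ∅ ∨ s2 = ∅ := by
  have h1' : ∀ z ∈ s2, z ∉ closure s1 := fun z hz hc =>
    eq_empty_iff_forall_notMem.mp h1 z ⟨hc, hz⟩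
  have h2' : ∀ z ∈ s1, z ∉ closure s2 := fun z hz hc =>
    eq_empty_iff_forall_notMem.mp h2 z ⟨hz, hc⟩
  rcases s1.eq_empty_or_nonempty with h | ⟨a, ha⟩
  · exact Or.inl h
  rcases s2.eq_empty_or_nonempty with h | ⟨b, hb⟩
  · exact Or.inr h
  exfalso
  obtain ⟨z, hzs, hz1, hz2⟩ := hs (closure s2)ᶜ (closure s1)ᶜ
    isClosed_closure.isOpen_compl isClosed_closure.isOpen_compl
    (by intro z hz
        rw [hu] at hz
        rcases hz with hz | hz
        · exact Or.inl (h2' z hz)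
        · exact Or.inr (h1' z hz))
    ⟨a, by rw [hu]; exact Or.inl ha, h2' a ha⟩
    ⟨b, by rw [hu]; exact Or.inr hb, h1' b hb⟩
  rw [hu] at hzs
  rcases hzs with hz | hz
  · exact hz2 (subset_closure hz)
  · exact hz1 (subset_closure hz)

/-- A preconnected set inside a union of two separated sets lies in the piece it meets. -/
lemma aux_side {X : Type*} [TopologicalSpace X] {t A B : Set X} (ht : IsPreconnected t)
    (hsub : t ⊆ A ∪ B) (h1 : closure A ∩ B = ∅) (h2 : A ∩ closure B = ∅)
    {a : X} (ha : a ∈ t) (haA : a ∈ A) : t ⊆ A := by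
  have hdec : t = t ∩ A ∪ t ∩ B := by
    rw [← inter_union_distrib_left, inter_eq_left.mpr hsub]
  have hs1 : closure (t ∩ A) ∩ (t ∩ B) = ∅ := by
    apply eq_empty_iff_forall_notMem.mpr
    rintro z ⟨hc, -, hzB⟩
    exact eq_empty_iff_forall_notMem.mp h1 z ⟨closure_mono inter_subset_right hc, hzB⟩
  have hs2 : (t ∩ A) ∩ closure (t ∩ B) = ∅ := by
    apply eq_empty_iff_forall_notMem.mpr
    rintro z ⟨⟨-, hzA⟩, hc⟩
    exact eq_empty_iff_forall_notMem.mp h2 z ⟨hzA, closure_mono inter_subset_right hc⟩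
  rcases aux_sep ht hdec hs1 hs2 with h | h
  · exact absurd (show a ∈ t ∩ A from ⟨ha, haA⟩) (by rw [h]; exact notMem_empty a)
  · intro z hz
    rcases hsub hz with hzA | hzB
    · exact hzA
    · exact absurd (show z ∈ t ∩ B from ⟨hz, hzB⟩) (by rw [h]; exact notMem_empty z)

/-- If `{p}ᶜ = A ∪ B` with `A, B` separated, then `B ∪ {p}` is preconnected
(in a connected space). -/
lemma aux_conn {X : Type*} [TopologicalSpace X] [ConnectedSpace X] {p : X} {A B : Set X}
    (hAB : A ∪ B = {p}ᶜ) (h1 : closure A ∩ B = ∅) (h2 : A ∩ closure B = ∅) :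
    IsPreconnected (B ∪ {p}) := by
  have claim : ∀ u v : Set X, IsOpen u → IsOpen v → B ∪ {p} ⊆ u ∪ v → p ∈ u →
      (B ∪ {p}) ∩ (u ∩ v) = ∅ → (B ∪ {p}) ∩ v = ∅ := by
    intro u v hu hv hcov hpu hemp
    set s1 : Set X := (B ∪ {p}) ∩ u with hs1def
    set s2 : Set X := (B ∪ {p}) ∩ v with hs2def
    have hpv : p ∉ v := fun hpv =>
      eq_empty_iff_forall_notMem.mp hemp p ⟨Or.inr rfl, hpu, hpv⟩
    have hs2B : s2 ⊆ B := by
      rintro z ⟨hz | hz, hzv⟩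
      · exact hz
      · rw [mem_singleton_iff] at hz
        exact absurd (hz ▸ hzv) hpv
    have hvs1 : v ∩ s1 = ∅ := by
      apply eq_empty_iff_forall_notMem.mpr
      rintro z ⟨hzv, hzB, hzu⟩
      exact eq_empty_iff_forall_notMem.mp hemp z ⟨hzB, hzu, hzv⟩
    have hus2 : u ∩ s2 = ∅ := by
      apply eq_empty_iff_forall_notMem.mpr
      rintro z ⟨hzu, hzB, hzv⟩
      exact eq_empty_iff_forall_notMem.mp hemp z ⟨hzB, hzu, hzv⟩
    have hc1 : closure s1 ∩ s2 = ∅ := by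
      apply eq_empty_iff_forall_notMem.mpr
      rintro z ⟨hc, hz2⟩
      obtain ⟨w, hwv, hws1⟩ := mem_closure_iff.mp hc v hv hz2.2
      exact eq_empty_iff_forall_notMem.mp hvs1 w ⟨hwv, hws1⟩
    have hc2 : s1 ∩ closure s2 = ∅ := by
      apply eq_empty_iff_forall_notMem.mpr
      rintro z ⟨hz1, hc⟩
      obtain ⟨w, hwu, hws2⟩ := mem_closure_iff.mp hc u hu hz1.2
      exact eq_empty_iff_forall_notMem.mp hus2 w ⟨hwu, hws2⟩
    have hps1 : p ∈ s1 := ⟨Or.inr rfl, hpu⟩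
    have hdec : (univ : Set X) = (A ∪ s1) ∪ s2 := by
      apply Subset.antisymm _ (subset_univ _)
      intro z _
      by_cases hzp : z = p
      · exact Or.inl (Or.inr (hzp ▸ hps1))
      · have : z ∈ A ∪ B := by rw [hAB]; exact hzp
        rcases this with hzA | hzB
        · exact Or.inl (Or.inl hzA)
        · rcases hcov (Or.inl hzB) with hzu | hzv
          · exact Or.inl (Or.inr ⟨Or.inl hzB, hzu⟩)
          · exact Or.inr ⟨Or.inl hzB, hzv⟩
    have hd1 : closure (A ∪ s1) ∩ s2 = ∅ := by
      apply eq_empty_iff_forall_notMem.mpr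
      rintro z ⟨hc, hz2⟩
      rw [closure_union] at hc
      rcases hc with hc | hc
      · exact eq_empty_iff_forall_notMem.mp h1 z ⟨hc, hs2B hz2⟩
      · exact eq_empty_iff_forall_notMem.mp hc1 z ⟨hc, hz2⟩
    have hd2 : (A ∪ s1) ∩ closure s2 = ∅ := by
      apply eq_empty_iff_forall_notMem.mpr
      rintro z ⟨hzA | hz1, hc⟩
      · exact eq_empty_iff_forall_notMem.mp h2 z ⟨hzA, closure_mono hs2B hc⟩
      · exact eq_empty_iff_forall_notMem.mp hc2 z ⟨hz1, hc⟩
    rcases aux_sep isPreconnected_univ hdec hd1 hd2 with h | h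
    · exact absurd (show p ∈ A ∪ s1 from Or.inr hps1) (by rw [h]; exact notMem_empty p)
    · exact h
  intro u v hu hv hcov hnu hnv
  by_contra hne
  rw [Set.not_nonempty_iff_eq_empty] at hne
  rcases hcov (show p ∈ B ∪ {p} from Or.inr rfl) with hpu | hpv
  · have := claim u v hu hv hcov hpu hne
    rw [this] at hnv
    exact Set.not_nonempty_empty hnv
  · have := claim v u hv hu (by rwa [union_comm v u]) hpv (by rwa [inter_comm v u])
    rw [this] at hnu
    exact Set.not_nonempty_empty hnu

/-- From a cut point `p` and `x ≠ p`, extract separated pieces `A ∋ x` and `B ≠ ∅`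
with both `A ∪ {p}` and `B ∪ {p}` preconnected. -/
lemma aux_pieces {X : Type*} [TopologicalSpace X] [ConnectedSpace X] {p : X}
    (h : ¬ IsPreconnected ({p}ᶜ : Set X)) {x : X} (hx : x ≠ p) :
    ∃ A B : Set X, A ∪ B = {p}ᶜ ∧ x ∈ A ∧ B.Nonempty ∧ closure A ∩ B = ∅ ∧
      A ∩ closure B = ∅ ∧ IsPreconnected (A ∪ {p}) ∧ IsPreconnected (B ∪ {p}) := by
  rw [IsPreconnected] at h
  push_neg at h
  obtain ⟨u, v, hu, hv, hcov, hnu, hnv, hemp⟩ := h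
  have key : ∀ u v : Set X, IsOpen v → ({p}ᶜ : Set X) ∩ (u ∩ v) = ∅ →
      closure (({p}ᶜ : Set X) ∩ u) ∩ (({p}ᶜ : Set X) ∩ v) = ∅ := by
    intro u v hv hemp
    apply eq_empty_iff_forall_notMem.mpr
    rintro z ⟨hzc, hzs, hzv⟩
    obtain ⟨w, hwv, hws, hwu⟩ := mem_closure_iff.mp hzc v hv hzv
    exact eq_empty_iff_forall_notMem.mp hemp w ⟨hws, hwu, hwv⟩
  have build : ∀ u v : Set X, IsOpen u → IsOpen v → ({p}ᶜ : Set X) ⊆ u ∪ v →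
      ({p}ᶜ : Set X) ∩ (u ∩ v) = ∅ → (({p}ᶜ : Set X) ∩ v).Nonempty → x ∈ u →
      ∃ A B : Set X, A ∪ B = {p}ᶜ ∧ x ∈ A ∧ B.Nonempty ∧ closure A ∩ B = ∅ ∧
        A ∩ closure B = ∅ ∧ IsPreconnected (A ∪ {p}) ∧ IsPreconnected (B ∪ {p}) := by
    intro u v hu hv hcov hemp hnv hxu
    have hemp' : ({p}ᶜ : Set X) ∩ (v ∩ u) = ∅ := by rwa [inter_comm v u]
    have hcov' : ({p}ᶜ : Set X) ⊆ v ∪ u := by rwa [union_comm v u]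
    have h1 := key u v hv hemp
    have h2' := key v u hu hemp'
    have h2 : ({p}ᶜ : Set X) ∩ u ∩ closure (({p}ᶜ : Set X) ∩ v) = ∅ := by
      rw [inter_comm]; exact h2'
    have hAB : ({p}ᶜ : Set X) ∩ u ∪ ({p}ᶜ : Set X) ∩ v = {p}ᶜ := by
      rw [← inter_union_distrib_left, inter_eq_left.mpr hcov]
    have hBA : ({p}ᶜ : Set X) ∩ v ∪ ({p}ᶜ : Set X) ∩ u = {p}ᶜ := by
      rw [← inter_union_distrib_left, inter_eq_left.mpr hcov']
    refine ⟨({p}ᶜ : Set X) ∩ u, ({p}ᶜ : Set X) ∩ v, hAB, ⟨hx, hxu⟩, hnv, h1, h2, ?_, ?_⟩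
    · exact aux_conn hBA h2' (by rw [inter_comm]; exact h1)
    · exact aux_conn hAB h1 h2
  have hxs : x ∈ ({p}ᶜ : Set X) := hx
  rcases hcov hxs with hxu | hxv
  · exact build u v hu hv hcov hemp hnv hxu
  · exact build v u hv hu (by rwa [union_comm v u]) (by rwa [inter_comm v u]) hnu hxv

/-- If `X` is a cut-point space, then for every `x ∈ X` and every connected component `C`
of `X \ {x}`, the set `C ∪ {x}` is not compact. -/
theorem stmt_2 {X : Type*} [TopologicalSpace X] [ConnectedSpace X]
    (hcut : ∀ x : X, ¬ IsPreconnected ({x}ᶜ : Set X))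
    (x y : X) (hy : y ≠ x) :
    ¬ IsCompact (connectedComponentIn ({x}ᶜ : Set X) y ∪ {x}) := by
  intro hK
  set C := connectedComponentIn ({x}ᶜ : Set X) y with hCdef
  have hyC : y ∈ C := mem_connectedComponentIn (by simpa using hy)
  have hCx : C ⊆ ({x}ᶜ : Set X) := connectedComponentIn_subset _ _
  have key : ∀ p : X, p ∈ C → ∃ A B : Set X, A ∪ B = {p}ᶜ ∧ x ∈ A ∧ B.Nonempty ∧
      closure A ∩ B = ∅ ∧ A ∩ closure B = ∅ ∧
      IsPreconnected (A ∪ {p}) ∧ IsPreconnected (B ∪ {p}) := by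
    intro p hp
    exact aux_pieces (hcut p) (Ne.symm (hCx hp))
  choose! A B hAB hxA hBne hclAB hAclB hpA hpB using key
  -- basic facts
  have hdisj : ∀ p, p ∈ C → ∀ z, z ∈ A p → z ∈ B p → False := by
    intro p hp z hzA hzB
    exact eq_empty_iff_forall_notMem.mp (hAclB p hp) z ⟨hzA, subset_closure hzB⟩
  have hBp : ∀ p, p ∈ C → B p ⊆ ({p}ᶜ : Set X) := by
    intro p hp z hz
    rw [← hAB p hp]
    exact Or.inr hz
  have hBC : ∀ p, p ∈ C → B p ∪ {p} ⊆ C := by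
    intro p hp
    have hsub : B p ∪ {p} ⊆ ({x}ᶜ : Set X) := by
      rintro z (hz | hz)
      · intro hzx
        rw [mem_singleton_iff] at hzx
        exact hdisj p hp z (hzx ▸ hxA p hp) hz
      · rw [mem_singleton_iff] at hz
        exact hz ▸ hCx hp
    have := (hpB p hp).subset_connectedComponentIn (Or.inr rfl : p ∈ B p ∪ {p}) hsub
    rwa [← connectedComponentIn_eq (show p ∈ connectedComponentIn ({x}ᶜ : Set X) y from hp)]
      at this
  have hclB : ∀ p, p ∈ C → closure (B p) ⊆ B p ∪ {p} := by
    intro p hp z hz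
    by_cases hzp : z = p
    · exact Or.inr hzp
    · have : z ∈ A p ∪ B p := by rw [hAB p hp]; exact hzp
      rcases this with hzA | hzB
      · exact absurd (show z ∈ A p ∩ closure (B p) from ⟨hzA, hz⟩)
          (by rw [hAclB p hp]; exact notMem_empty z)
      · exact Or.inl hzB
  have hnest : ∀ p, p ∈ C → ∀ z, z ∈ B p → B z ∪ {z} ⊆ B p := by
    intro p hp z hz
    have hzC : z ∈ C := hBC p hp (Or.inl hz)
    have hsub2 : A p ∪ {p} ⊆ A z ∪ B z := by
      rw [hAB z hzC]
      rintro w (hw | hw)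
      · intro hwz
        rw [mem_singleton_iff] at hwz
        exact hdisj p hp z (hwz ▸ hw) hz
      · rw [mem_singleton_iff] at hw
        intro hwz
        rw [mem_singleton_iff] at hwz
        exact hBp p hp hz (by rw [mem_singleton_iff]; rw [← hwz, hw])
    have hAz : A p ∪ {p} ⊆ A z :=
      aux_side (hpA p hp) hsub2 (hclAB z hzC) (hAclB z hzC)
        (Or.inl (hxA p hp) : x ∈ A p ∪ {p}) (hxA z hzC)
    rintro w (hw | hw)
    · -- w ∈ B z, show w ∈ B p
      have hwp : w ≠ p := by
        intro h
        exact hdisj z hzC p (hAz (Or.inr rfl)) (h ▸ hw)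
      have : w ∈ A p ∪ B p := by rw [hAB p hp]; exact hwp
      rcases this with hwA | hwB
      · exact absurd hw (fun hwB' => hdisj z hzC w (hAz (Or.inl hwA)) hwB')
      · exact hwB
    · rw [mem_singleton_iff] at hw
      exact hw ▸ hz
  -- the collection of sets and a maximal chain
  set 𝒮 : Set (Set X) := {s | ∃ p ∈ C, B p ∪ {p} = s} with h𝒮def
  have hDy : (B y ∪ {y}) ∈ 𝒮 := ⟨y, hyC, rfl⟩
  have hchain0 : IsChain (fun a b : ↥𝒮 => (a : Set X) ⊆ (b : Set X))
      {(⟨B y ∪ {y}, hDy⟩ : ↥𝒮)} := Set.pairwise_singleton _ _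
  obtain ⟨T, hTmax, hTsub⟩ := hchain0.exists_maxChain
  have hTne : Nonempty ↥T := ⟨⟨⟨B y ∪ {y}, hDy⟩, hTsub rfl⟩⟩
  choose P hPC hPD using fun t : ↥T => (t : ↥𝒮).2
  -- the family of closures
  set fam : ↥T → Set X := fun t => closure (B (P t)) with hfamdef
  have hfamD : ∀ t : ↥T, fam t ⊆ ((t : ↥𝒮) : Set X) := by
    intro t
    have := hclB (P t) (hPC t)
    rw [hPD t] at this
    exact this
  have hfamC : ∀ t : ↥T, fam t ⊆ C := fun t =>
    (hclB (P t) (hPC t)).trans (hBC (P t) (hPC t))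
  have hmono : ∀ t1 t2 : ↥T, ((t1 : ↥𝒮) : Set X) ⊆ ((t2 : ↥𝒮) : Set X) →
      fam t1 ⊆ fam t2 := by
    intro t1 t2 hsub
    have hmem : P t1 ∈ B (P t2) ∪ {P t2} := by
      rw [hPD t2]
      exact hsub (by rw [← hPD t1]; exact Or.inr rfl)
    rcases hmem with hm | hm
    · exact closure_mono ((hnest (P t2) (hPC t2) (P t1) hm).trans' subset_union_left)
    · rw [mem_singleton_iff] at hm
      show closure (B (P t1)) ⊆ closure (B (P t2))
      rw [hm]
  have hdir : Directed (· ⊇ ·) fam := by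
    intro t1 t2
    rcases eq_or_ne t1 t2 with h | h
    · exact ⟨t1, Subset.rfl, by rw [h]⟩
    · have h' : (t1 : ↥𝒮) ≠ (t2 : ↥𝒮) := fun hh => h (Subtype.ext hh)
      rcases hTmax.1 t1.2 t2.2 h' with hle | hle
      · exact ⟨t1, Subset.rfl, hmono t1 t2 hle⟩
      · exact ⟨t2, hmono t2 t1 hle, Subset.rfl⟩
  have hnonempty : ∀ t : ↥T, (fam t).Nonempty :=
    fun t => ((hBne (P t) (hPC t)).mono subset_closure)
  have hclosed : ∀ t : ↥T, IsClosed (fam t) := fun t => isClosed_closure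
  have hcompact : ∀ t : ↥T, IsCompact (fam t) := fun t =>
    hK.of_isClosed_subset (hclosed t) ((hfamC t).trans subset_union_left)
  obtain ⟨p, hp⟩ := IsCompact.nonempty_iInter_of_directed_nonempty_isCompact_isClosed
    fam hdir hnonempty hcompact hclosed
  rw [mem_iInter] at hp
  have hpC : p ∈ C := hfamC ⟨⟨B y ∪ {y}, hDy⟩, hTsub rfl⟩ (hp _)
  -- D p is a lower bound for the chain
  have hlow : ∀ t : ↥T, B p ∪ {p} ⊆ ((t : ↥𝒮) : Set X) := by
    intro t
    have hmem : p ∈ B (P t) ∪ {P t} := hclB (P t) (hPC t) (hp t)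
    rcases hmem with hm | hm
    · exact (hnest (P t) (hPC t) p hm).trans
        (by rw [← hPD t]; exact subset_union_left)
    · rw [mem_singleton_iff] at hm
      rw [hm, hPD t]
  -- pick q strictly below
  obtain ⟨q, hq⟩ := hBne p hpC
  have hqC : q ∈ C := hBC p hpC (Or.inl hq)
  have hDq : (B q ∪ {q}) ∈ 𝒮 := ⟨q, hqC, rfl⟩
  have hDqlow : ∀ t : ↥T, B q ∪ {q} ⊆ ((t : ↥𝒮) : Set X) := fun t =>
    ((hnest p hpC q hq).trans subset_union_left).trans (hlow t)
  have hchain' : IsChain (fun a b : ↥𝒮 => (a : Set X) ⊆ (b : Set X))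
      (insert (⟨B q ∪ {q}, hDq⟩ : ↥𝒮) T) :=
    hTmax.1.insert fun b hb _ => Or.inl (hDqlow ⟨b, hb⟩)
  have hmemT : (⟨B q ∪ {q}, hDq⟩ : ↥𝒮) ∈ T := by
    have := hTmax.2 hchain' (Set.subset_insert _ _)
    rw [this]
    exact Set.mem_insert _ _
  -- contradiction
  have hfinal : p ∈ B p := by
    have h1 : p ∈ fam ⟨⟨B q ∪ {q}, hDq⟩, hmemT⟩ := hp _
    have h2 := hfamD ⟨⟨B q ∪ {q}, hDq⟩, hmemT⟩ h1
    exact hnest p hpC q hq h2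
  exact hBp p hpC hfinal rfl
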